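/- arXiv:2603.04880 — 2 statements merged into one kernel-verified Lean document; each statement's English description precedes it below -/
import Mathlib

section
/- Let U ⊆ ℝ × ℝ^d be open and let u : U → ℝ be continuously differentiable in the time variable t and twice continuously differentiable in the space variable x, with u(t,x) > 0 for all (t,x) ∈ U. Let (t,x) ∈ U, let a be a symmetric real d×d matrix, μ ∈ ℝ^d and f ∈ ℝ, and suppose that ∂ₜu(t,x) + (1/2)tr(a D²u(t,x)) + ⟨μ, ∇u(t,x)⟩ − (1/2) f u(t,x) = 0, where ∇u and D²u denote the spatial gradient and spatial Hessian. Then the function V := −2 ln u satisfies ∂ₜV(t,x) + (1/2)tr(a D²V(t,x)) + ⟨μ, ∇V(t,x)⟩ − (1/4)⟨a ∇V(t,x), ∇V(t,x)⟩ + f = 0. -/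
/-- Partial derivative in the time variable. -/
noncomputable def ptime {d : ℕ} (u : ℝ → (Fin d → ℝ) → ℝ) (s : ℝ) (y : Fin d → ℝ) : ℝ :=
  deriv (fun r => u r y) s

/-- Partial derivative in the `i`-th spatial coordinate. -/
noncomputable def pspace {d : ℕ} (i : Fin d) (u : ℝ → (Fin d → ℝ) → ℝ) (s : ℝ)
    (y : Fin d → ℝ) : ℝ :=
  deriv (fun z => u s (Function.update y i z)) (y i)

/-- The logarithmic transformation: if `u ∈ C^{1,2}(U)`, `u > 0` on the open set `U`, and
`∂ₜu + (1/2)tr(a D²u) + ⟨μ, ∇u⟩ − (1/2) f u = 0` at `(t,x) ∈ U`, then `V = −2 ln u`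
satisfies `∂ₜV + (1/2)tr(a D²V) + ⟨μ, ∇V⟩ − (1/4)⟨a ∇V, ∇V⟩ + f = 0` at `(t,x)`. -/
theorem stmt_2 (d : ℕ) (hd : 1 ≤ d) (U : Set (ℝ × (Fin d → ℝ))) (hU : IsOpen U)
    (u : ℝ → (Fin d → ℝ) → ℝ)
    (ut : ℝ → (Fin d → ℝ) → ℝ) (g : ℝ → (Fin d → ℝ) → Fin d → ℝ)
    (H : ℝ → (Fin d → ℝ) → Fin d → Fin d → ℝ)
    -- C^{1,2} regularity on U: time derivative, spatial gradient and spatial Hessian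
    -- exist at every point of U and are continuous on U
    (hut : ∀ p ∈ U, HasDerivAt (fun r => u r p.2) (ut p.1 p.2) p.1)
    (hg : ∀ p ∈ U, ∀ i,
      HasDerivAt (fun z => u p.1 (Function.update p.2 i z)) (g p.1 p.2 i) (p.2 i))
    (hH : ∀ p ∈ U, ∀ i j,
      HasDerivAt (fun z => g p.1 (Function.update p.2 j z) i) (H p.1 p.2 i j) (p.2 j))
    (hutc : ContinuousOn (fun p : ℝ × (Fin d → ℝ) => ut p.1 p.2) U)
    (huc : ContinuousOn (fun p : ℝ × (Fin d → ℝ) => u p.1 p.2) U)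
    (hgc : ∀ i, ContinuousOn (fun p : ℝ × (Fin d → ℝ) => g p.1 p.2 i) U)
    (hHc : ∀ i j, ContinuousOn (fun p : ℝ × (Fin d → ℝ) => H p.1 p.2 i j) U)
    -- positivity of u on U
    (hupos : ∀ p ∈ U, 0 < u p.1 p.2)
    (t : ℝ) (x : Fin d → ℝ) (hmem : (t, x) ∈ U)
    (a : Fin d → Fin d → ℝ) (hsymm : ∀ i j, a i j = a j i)
    (μ : Fin d → ℝ) (f : ℝ)
    -- the linear PDE at (t,x): ∂ₜu + (1/2)tr(a D²u) + ⟨μ, ∇u⟩ − (1/2) f u = 0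
    (hpde : ut t x + (1 / 2) * (∑ i, ∑ j, a i j * H t x j i)
        + (∑ i, μ i * g t x i) - (1 / 2) * f * u t x = 0) :
    -- conclusion for V = −2 ln u
    (DifferentiableAt ℝ (fun r => (fun s y => -2 * Real.log (u s y)) r x) t) ∧
    (∀ i, DifferentiableAt ℝ
      (fun z => (fun s y => -2 * Real.log (u s y)) t (Function.update x i z)) (x i)) ∧
    (∀ i j, DifferentiableAt ℝ
      (fun z => pspace i (fun s y => -2 * Real.log (u s y)) t (Function.update x j z)) (x j)) ∧
    ptime (fun s y => -2 * Real.log (u s y)) t x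
      + (1 / 2) * (∑ i, ∑ j, a i j *
          deriv (fun z =>
            pspace j (fun s y => -2 * Real.log (u s y)) t (Function.update x i z)) (x i))
      + (∑ i, μ i * pspace i (fun s y => -2 * Real.log (u s y)) t x)
      - (1 / 4) * (∑ i, (∑ j, a i j * pspace j (fun s y => -2 * Real.log (u s y)) t x)
          * pspace i (fun s y => -2 * Real.log (u s y)) t x)
      + f = 0 := by
  have hu0 : u t x ≠ 0 := (hupos _ hmem).ne'
  set V : ℝ → (Fin d → ℝ) → ℝ := fun s y => -2 * Real.log (u s y) with hV
  -- first spatial derivative of V at any point of U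
  have hps : ∀ s y, (s, y) ∈ U → ∀ i,
      HasDerivAt (fun z => V s (Function.update y i z)) (-2 * (g s y i / u s y)) (y i) := by
    intro s y hy i
    have h2 : u s (Function.update y i (y i)) ≠ 0 := by
      rw [Function.update_eq_self]; exact (hupos (s, y) hy).ne'
    have h3' := ((hg (s, y) hy i).log h2).const_mul (-2 : ℝ)
    rw [Function.update_eq_self] at h3'
    exact h3'
  have hpsval : ∀ s y, (s, y) ∈ U → ∀ i, pspace i V s y = -2 * (g s y i / u s y) := by
    intro s y hy i
    exact (hps s y hy i).deriv
  -- second spatial derivative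
  have hsecond : ∀ i j, HasDerivAt (fun z => pspace j V t (Function.update x i z))
      (-2 * ((H t x j i * u t x - g t x j * g t x i) / (u t x) ^ 2)) (x i) := by
    intro i j
    have hc : Continuous fun z : ℝ => ((t, Function.update x i z) : ℝ × (Fin d → ℝ)) :=
      continuous_const.prodMk (continuous_const.update i continuous_id)
    have hx' : ((t, Function.update x i (x i)) : ℝ × (Fin d → ℝ)) ∈ U := by
      rw [Function.update_eq_self]; exact hmem
    have hmem' : ∀ᶠ z in nhds (x i), (t, Function.update x i z) ∈ U :=
      hc.continuousAt.preimage_mem_nhds (hU.mem_nhds hx')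
    have heq : (fun z => pspace j V t (Function.update x i z))
        =ᶠ[nhds (x i)] (fun z => -2 * (g t (Function.update x i z) j / u t (Function.update x i z))) :=
      hmem'.mono fun z hz => hpsval t _ hz j
    have h2 : u t (Function.update x i (x i)) ≠ 0 := by
      rw [Function.update_eq_self]; exact hu0
    have hψ := (((hH (t, x) hmem j i).div (hg (t, x) hmem i) h2).const_mul (-2 : ℝ))
    simp only [Function.update_eq_self] at hψ
    exact hψ.congr_of_eventuallyEq heq
  -- time derivative
  have htime : HasDerivAt (fun r => V r x) (-2 * (ut t x / u t x)) t :=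
    ((hut (t, x) hmem).log hu0).const_mul (-2 : ℝ)
  refine ⟨htime.differentiableAt, fun i => (hps t x hmem i).differentiableAt,
    fun i j => (hsecond j i).differentiableAt, ?_⟩
  have h1 : ptime V t x = -2 * (ut t x / u t x) := htime.deriv
  have h3 : ∀ i j, deriv (fun z => pspace j V t (Function.update x i z)) (x i)
      = -2 * ((H t x j i * u t x - g t x j * g t x i) / (u t x) ^ 2) :=
    fun i j => (hsecond i j).deriv
  rw [h1]
  simp only [h3, hpsval t x hmem]
  have hA : (∑ i, ∑ j, a i j * (-2 * ((H t x j i * u t x - g t x j * g t x i) / (u t x) ^ 2)))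
      = (-2 / u t x) * (∑ i, ∑ j, a i j * H t x j i)
        + (2 / (u t x) ^ 2) * (∑ i, ∑ j, a i j * (g t x j * g t x i)) := by
    rw [Finset.mul_sum, Finset.mul_sum, ← Finset.sum_add_distrib]
    refine Finset.sum_congr rfl fun i _ => ?_
    rw [Finset.mul_sum, Finset.mul_sum, ← Finset.sum_add_distrib]
    refine Finset.sum_congr rfl fun j _ => ?_
    field_simp
    try ring
    try tauto
  have hC : (∑ i, μ i * (-2 * (g t x i / u t x))) = (-2 / u t x) * (∑ i, μ i * g t x i) := by
    rw [Finset.mul_sum]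
    refine Finset.sum_congr rfl fun i _ => ?_
    field_simp
    try ring
    try tauto
  have hQ : (∑ i, (∑ j, a i j * (-2 * (g t x j / u t x))) * (-2 * (g t x i / u t x)))
      = (4 / (u t x) ^ 2) * (∑ i, ∑ j, a i j * (g t x j * g t x i)) := by
    rw [Finset.mul_sum]
    refine Finset.sum_congr rfl fun i _ => ?_
    rw [Finset.sum_mul, Finset.mul_sum]
    refine Finset.sum_congr rfl fun j _ => ?_
    field_simp
    try ring
    try tauto
  rw [hA, hC, hQ]
  field_simp
  linear_combination (-2 * u t x) * hpde
end

section
/- Let U ⊆ ℝ × ℝ^d be open and let u : U → ℝ be continuously differentiable in the time variable t and twice continuously differentiable in the space variable x, with u(t,x) ≥ 0 for all (t,x) ∈ U, and let λ > 0. Let (t,x) ∈ U, let a be a symmetric real d×d matrix, μ ∈ ℝ^d and f ∈ ℝ, and suppose that ∂ₜu(t,x) + (1/2)tr(a D²u(t,x)) + ⟨μ, ∇u(t,x)⟩ − (1/2) f u(t,x) = 0. Then the function V^λ := −2 ln(u + λ) satisfies ∂ₜV^λ(t,x) + (1/2)tr(a D²V^λ(t,x)) + ⟨μ, ∇V^λ(t,x)⟩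 − (1/4)⟨a ∇V^λ(t,x), ∇V^λ(t,x)⟩ + (u(t,x)/(u(t,x)+λ)) f = 0. -/
/-- The λ-regularised logarithmic transformation: if `u ∈ C^{1,2}(U)`, `u ≥ 0` on the open
set `U`, `λ > 0`, and `∂ₜu + (1/2)tr(a D²u) + ⟨μ, ∇u⟩ − (1/2) f u = 0` at `(t,x) ∈ U`, then
`V^λ = −2 ln (u + λ)` satisfies
`∂ₜV^λ + (1/2)tr(a D²V^λ) + ⟨μ, ∇V^λ⟩ − (1/4)⟨a ∇V^λ, ∇V^λ⟩ + (u/(u+λ)) f = 0` at `(t,x)`. -/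
theorem stmt_3 (d : ℕ) (hd : 1 ≤ d) (U : Set (ℝ × (Fin d → ℝ))) (hU : IsOpen U)
    (u : ℝ → (Fin d → ℝ) → ℝ)
    (ut : ℝ → (Fin d → ℝ) → ℝ) (g : ℝ → (Fin d → ℝ) → Fin d → ℝ)
    (H : ℝ → (Fin d → ℝ) → Fin d → Fin d → ℝ)
    -- C^{1,2} regularity on U: time derivative, spatial gradient and spatial Hessian
    -- exist at every point of U and are continuous on U
    (hut : ∀ p ∈ U, HasDerivAt (fun r => u r p.2) (ut p.1 p.2) p.1)
    (hg : ∀ p ∈ U, ∀ i,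
      HasDerivAt (fun z => u p.1 (Function.update p.2 i z)) (g p.1 p.2 i) (p.2 i))
    (hH : ∀ p ∈ U, ∀ i j,
      HasDerivAt (fun z => g p.1 (Function.update p.2 j z) i) (H p.1 p.2 i j) (p.2 j))
    (hutc : ContinuousOn (fun p : ℝ × (Fin d → ℝ) => ut p.1 p.2) U)
    (huc : ContinuousOn (fun p : ℝ × (Fin d → ℝ) => u p.1 p.2) U)
    (hgc : ∀ i, ContinuousOn (fun p : ℝ × (Fin d → ℝ) => g p.1 p.2 i) U)
    (hHc : ∀ i j, ContinuousOn (fun p : ℝ × (Fin d → ℝ) => H p.1 p.2 i j) U)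
    -- nonnegativity of u on U, and λ > 0
    (hupos : ∀ p ∈ U, 0 ≤ u p.1 p.2)
    (lam : ℝ) (hlam : 0 < lam)
    (t : ℝ) (x : Fin d → ℝ) (hmem : (t, x) ∈ U)
    (a : Fin d → Fin d → ℝ) (hsymm : ∀ i j, a i j = a j i)
    (μ : Fin d → ℝ) (f : ℝ)
    -- the linear PDE at (t,x): ∂ₜu + (1/2)tr(a D²u) + ⟨μ, ∇u⟩ − (1/2) f u = 0
    (hpde : ut t x + (1 / 2) * (∑ i, ∑ j, a i j * H t x j i)
        + (∑ i, μ i * g t x i) - (1 / 2) * f * u t x = 0) :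
    -- conclusion for V^λ = −2 ln (u + λ)
    (DifferentiableAt ℝ (fun r => (fun s y => -2 * Real.log (u s y + lam)) r x) t) ∧
    (∀ i, DifferentiableAt ℝ
      (fun z => (fun s y => -2 * Real.log (u s y + lam)) t (Function.update x i z)) (x i)) ∧
    (∀ i j, DifferentiableAt ℝ
      (fun z => pspace i (fun s y => -2 * Real.log (u s y + lam)) t (Function.update x j z)) (x j)) ∧
    ptime (fun s y => -2 * Real.log (u s y + lam)) t x
      + (1 / 2) * (∑ i, ∑ j, a i j *
          deriv (fun z =>
            pspace j (fun s y => -2 * Real.log (u s y + lam)) t (Function.update x i z)) (x i))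
      + (∑ i, μ i * pspace i (fun s y => -2 * Real.log (u s y + lam)) t x)
      - (1 / 4) * (∑ i, (∑ j, a i j * pspace j (fun s y => -2 * Real.log (u s y + lam)) t x)
          * pspace i (fun s y => -2 * Real.log (u s y + lam)) t x)
      + (u t x / (u t x + lam)) * f = 0 := by
  -- abbreviations
  have hcpos : ∀ p ∈ U, (0:ℝ) < u p.1 p.2 + lam := fun p hp =>
    add_pos_of_nonneg_of_pos (hupos p hp) hlam
  have hcne : ∀ p ∈ U, u p.1 p.2 + lam ≠ 0 := fun p hp => (hcpos p hp).ne'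
  -- first spatial derivative of V at any point of U
  have hVg : ∀ p ∈ U, ∀ i, HasDerivAt
      (fun z => -2 * Real.log (u p.1 (Function.update p.2 i z) + lam))
      (-2 * g p.1 p.2 i / (u p.1 p.2 + lam)) (p.2 i) := by
    intro p hp i
    have h1 : HasDerivAt (fun z => u p.1 (Function.update p.2 i z) + lam)
        (g p.1 p.2 i) (p.2 i) := (hg p hp i).add_const lam
    have hne : u p.1 (Function.update p.2 i (p.2 i)) + lam ≠ 0 := by
      simpa [Function.update_eq_self] using hcne p hp
    have := (h1.log hne).const_mul (-2 : ℝ)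
    simpa [Function.update_eq_self, neg_div, mul_div_assoc] using this
  -- the formula for pspace of V
  have hVps : ∀ p ∈ U, ∀ i,
      pspace i (fun s y => -2 * Real.log (u s y + lam)) p.1 p.2
        = -2 * g p.1 p.2 i / (u p.1 p.2 + lam) := by
    intro p hp i
    exact (hVg p hp i).deriv
  -- time derivative of V
  have hVt : HasDerivAt (fun r => -2 * Real.log (u r x + lam))
      (-2 * ut t x / (u t x + lam)) t := by
    have h1 : HasDerivAt (fun r => u r x + lam) (ut t x) t :=
      (hut (t, x) hmem).add_const lam
    have hne : u t x + lam ≠ 0 := hcne (t, x) hmem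
    have := (h1.log hne).const_mul (-2 : ℝ)
    simpa [neg_div, mul_div_assoc] using this
  -- second spatial derivatives
  have hV2 : ∀ i j, HasDerivAt
      (fun z => pspace j (fun s y => -2 * Real.log (u s y + lam)) t (Function.update x i z))
      ((-2 * H t x j i * (u t x + lam) - -2 * g t x j * g t x i) / (u t x + lam) ^ 2)
      (x i) := by
    intro i j
    -- eventual membership in U
    have hcont : Continuous (fun z : ℝ => ((t, Function.update x i z) : ℝ × (Fin d → ℝ))) := by
      apply Continuous.prodMk continuous_const
      exact continuous_pi fun k => by
        rcases eq_or_ne k i with rfl | hk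
        · simpa using continuous_id'
        · simpa [Function.update_of_ne hk] using (continuous_const : Continuous fun _ : ℝ => x k)
    have hev : ∀ᶠ z in nhds (x i), ((t, Function.update x i z) : ℝ × (Fin d → ℝ)) ∈ U := by
      have : Function.update x i (x i) = x := Function.update_eq_self i x
      refine hcont.continuousAt.preimage_mem_nhds ?_
      rw [this]
      exact hU.mem_nhds hmem
    -- the clean formula holds eventually
    have heq : (fun z => pspace j (fun s y => -2 * Real.log (u s y + lam)) t
          (Function.update x i z))
        =ᶠ[nhds (x i)] fun z =>
          -2 * g t (Function.update x i z) j / (u t (Function.update x i z) + lam) := by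
          filter_upwards [hev] with z hz
          exact hVps (t, Function.update x i z) hz j
    -- derivative of the clean formula
    have hnum : HasDerivAt (fun z => -2 * g t (Function.update x i z) j)
        (-2 * H t x j i) (x i) := (hH (t, x) hmem j i).const_mul (-2 : ℝ)
    have hden : HasDerivAt (fun z => u t (Function.update x i z) + lam)
        (g t x i) (x i) := (hg (t, x) hmem i).add_const lam
    have hne : u t (Function.update x i (x i)) + lam ≠ 0 := by
      simpa [Function.update_eq_self] using hcne (t, x) hmem
    have hdiv := hnum.div hden hne
    rw [Function.update_eq_self] at hdiv
    exact hdiv.congr_of_eventuallyEq heq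
  refine ⟨hVt.differentiableAt, fun i => (hVg (t, x) hmem i).differentiableAt,
    fun i j => (hV2 j i).differentiableAt, ?_⟩
  -- now the computation
  have hne : u t x + lam ≠ 0 := hcne (t, x) hmem
  have hpt : ptime (fun s y => -2 * Real.log (u s y + lam)) t x
      = -2 * ut t x / (u t x + lam) := hVt.deriv
  have hps : ∀ i, pspace i (fun s y => -2 * Real.log (u s y + lam)) t x
      = -2 * g t x i / (u t x + lam) := fun i => hVps (t, x) hmem i
  have hd2 : ∀ i j, deriv (fun z =>
        pspace j (fun s y => -2 * Real.log (u s y + lam)) t (Function.update x i z)) (x i)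
      = (-2 * H t x j i * (u t x + lam) - -2 * g t x j * g t x i) / (u t x + lam) ^ 2 :=
    fun i j => (hV2 i j).deriv
  simp only [hpt, hps, hd2]
  set c := u t x + lam with hc
  set S1 := ∑ i, ∑ j, a i j * H t x j i with hS1
  set S2 := ∑ i, ∑ j, a i j * g t x j * g t x i with hS2
  set S3 := ∑ i, μ i * g t x i with hS3
  have hA : (∑ i, ∑ j, a i j *
        ((-2 * H t x j i * c - -2 * g t x j * g t x i) / c ^ 2))
      = (-2 / c) * S1 + (2 / c ^ 2) * S2 := by
    rw [hS1, hS2, Finset.mul_sum, Finset.mul_sum, ← Finset.sum_add_distrib]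
    refine Finset.sum_congr rfl fun i _ => ?_
    rw [Finset.mul_sum, Finset.mul_sum, ← Finset.sum_add_distrib]
    refine Finset.sum_congr rfl fun j _ => ?_
    field_simp
    ring
  have hB : (∑ i, (∑ j, a i j * (-2 * g t x j / c)) * (-2 * g t x i / c))
      = (4 / c ^ 2) * S2 := by
    rw [hS2, Finset.mul_sum]
    refine Finset.sum_congr rfl fun i _ => ?_
    rw [Finset.sum_mul, Finset.mul_sum]
    refine Finset.sum_congr rfl fun j _ => ?_
    field_simp
    ring
  have hC : (∑ i, μ i * (-2 * g t x i / c)) = (-2 / c) * S3 := by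
    rw [hS3, Finset.mul_sum]
    refine Finset.sum_congr rfl fun i _ => ?_
    ring
  rw [hA, hB, hC]
  have hut0 : ut t x = (1 / 2) * f * u t x - (1 / 2) * S1 - S3 := by
    rw [hS1, hS3]; linarith [hpde]
  rw [hut0]
  field_simp
  ring
end
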